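/- For positive semidefinite matrices A, B and every k, the sum of the k largest singular values of (A−B)² is at most the sum of the k largest singular values of A² − B²; equivalently, ‖(A−B)²‖ ≤ ‖A²−B²‖ for all unitarily invariant norms. -/

import Mathlib

open Matrix
open scoped ComplexOrder

/-- `f` applied to a matrix via the spectral decomposition (junk value `0` if
the matrix is not Hermitian). -/
noncomputable def matFun {n : ℕ} (f : ℝ → ℝ) (A : Matrix (Fin n) (Fin n) ℂ) :
    Matrix (Fin n) (Fin n) ℂ :=
  if hA : A.IsHermitian then
    (hA.eigenvectorUnitary : Matrix (Fin n) (Fin n) ℂ) *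
      Matrix.diagonal (fun i => (f (hA.eigenvalues i) : ℂ)) *
      (star hA.eigenvectorUnitary : Matrix (Fin n) (Fin n) ℂ)
  else 0

/-- The eigenvalues of a Hermitian matrix, sorted in non-increasing order
(junk value `0` if the matrix is not Hermitian). -/
noncomputable def eigsDesc {n : ℕ} (A : Matrix (Fin n) (Fin n) ℂ) : Fin n → ℝ :=
  if hA : A.IsHermitian then (fun k => hA.eigenvalues (Tuple.sort hA.eigenvalues (Fin.rev k)))
  else 0

/-- The absolute value `|X| = (XᴴX)^{1/2}` of a matrix. -/
noncomputable def matAbs {n : ℕ} (X : Matrix (Fin n) (Fin n) ℂ) : Matrix (Fin n) (Fin n) ℂ :=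
  ((Matrix.posSemidef_conjTranspose_mul_self X).1.eigenvectorUnitary : Matrix (Fin n) (Fin n) ℂ) *
    Matrix.diagonal ((↑) ∘ ((Matrix.posSemidef_conjTranspose_mul_self X).1.eigenvalues · |>.sqrt)) *
    (star (Matrix.posSemidef_conjTranspose_mul_self X).1.eigenvectorUnitary : Matrix (Fin n) (Fin n) ℂ)

/-- The singular values of `X`, sorted in non-increasing order. -/
noncomputable def svalsDesc {n : ℕ} (X : Matrix (Fin n) (Fin n) ℂ) : Fin n → ℝ :=
  eigsDesc (matAbs X)

/-- Sum of the first `k` entries of a vector indexed by `Fin n`. -/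
noncomputable def kSum {n : ℕ} (μ : Fin n → ℝ) (k : ℕ) : ℝ :=
  ∑ j ∈ Finset.univ.filter (fun j : Fin n => (j : ℕ) < k), μ j

/-- The operator norm: the largest singular value. -/
noncomputable def opNorm {n : ℕ} (X : Matrix (Fin n) (Fin n) ℂ) : ℝ :=
  ⨆ i, svalsDesc X i


section BhatiaAux

open Polynomial

variable {n : ℕ}


lemma card_filter_lt {n k : ℕ} (hk : k ≤ n) :
    (Finset.univ.filter (fun j : Fin n => (j : ℕ) < k)).card = k := by
  rw [← Finset.card_range k]
  apply Finset.card_bij (fun (a : Fin n) _ => (a : ℕ))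
  · intro a ha; simp only [Finset.mem_filter] at ha; simpa using ha.2
  · intro a _ b _ h; exact Fin.val_injective h
  · intro b hb
    simp only [Finset.mem_range] at hb
    exact ⟨⟨b, lt_of_lt_of_le hb hk⟩, by simp [hb], rfl⟩

lemma kfan_abstract {n k : ℕ} (μ t : Fin n → ℝ) (hmono : Antitone μ) (hpos : ∀ i, 0 ≤ μ i)
    (ht0 : ∀ i, 0 ≤ t i) (ht1 : ∀ i, t i ≤ 1) (hsum : ∑ i, t i ≤ (k : ℝ)) :
    ∑ i, μ i * t i ≤ kSum μ k := by
  rcases le_or_gt n k with hk | hk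
  · have : Finset.univ.filter (fun j : Fin n => (j : ℕ) < k) = Finset.univ := by
      ext j; simp [lt_of_lt_of_le j.isLt hk]
    rw [kSum, this]
    exact Finset.sum_le_sum fun i _ => mul_le_of_le_one_right (hpos i) (ht1 i)
  · set F := Finset.univ.filter (fun j : Fin n => (j : ℕ) < k) with hF
    set K : Fin n := ⟨k, hk⟩
    have hθ : 0 ≤ μ K := hpos K
    have key : ∑ i, μ i * t i ≤ kSum μ k + μ K * ((∑ i, t i) - k) := by
      rw [← Finset.sum_filter_add_sum_filter_not Finset.univ (fun j : Fin n => (j : ℕ) < k)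
        (fun i => μ i * t i)]
      have h1 : ∑ i ∈ F, μ i * t i ≤ ∑ i ∈ F, (μ i + μ K * (t i - 1)) := by
        apply Finset.sum_le_sum
        intro i hi
        have hiK : i ≤ K := by
          simp only [hF, Finset.mem_filter] at hi
          exact le_of_lt (by exact hi.2)
        have : μ K ≤ μ i := hmono hiK
        nlinarith [ht1 i]
      have h2 : ∑ i ∈ Finset.univ.filter (fun j : Fin n => ¬ ((j : ℕ) < k)), μ i * t i ≤
          ∑ i ∈ Finset.univ.filter (fun j : Fin n => ¬ ((j : ℕ) < k)), μ K * t i := by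
        apply Finset.sum_le_sum
        intro i hi
        simp only [Finset.mem_filter, not_lt] at hi
        have : μ i ≤ μ K := hmono (by exact Fin.mk_le_of_le_val hi.2)
        exact mul_le_mul_of_nonneg_right this (ht0 i)
      have hcard : (F.card : ℝ) = k := by
        rw [card_filter_lt (le_of_lt hk)]
      calc ∑ i ∈ F, μ i * t i + ∑ i ∈ Finset.univ.filter (fun j : Fin n => ¬ ((j : ℕ) < k)), μ i * t i
          ≤ ∑ i ∈ F, (μ i + μ K * (t i - 1)) + ∑ i ∈ Finset.univ.filter (fun j : Fin n => ¬ ((j : ℕ) < k)), μ K * t i := by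
            exact add_le_add h1 h2
        _ = kSum μ k + μ K * ((∑ i, t i) - k) := by
            rw [Finset.sum_add_distrib, ← Finset.mul_sum, ← Finset.mul_sum, kSum]
            have : ∑ i ∈ F, (t i - 1) = (∑ i ∈ F, t i) - F.card := by
              rw [Finset.sum_sub_distrib]; simp
            rw [this, hcard]
            have hsplit : (∑ i ∈ F, t i) + ∑ i ∈ Finset.univ.filter (fun j : Fin n => ¬ ((j : ℕ) < k)), t i = ∑ i, t i :=
              Finset.sum_filter_add_sum_filter_not Finset.univ _ t
            ring_nf
            nlinarith [hsplit]
    have : μ K * ((∑ i, t i) - k) ≤ 0 :=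
      mul_nonpos_of_nonneg_of_nonpos hθ (by linarith)
    linarith



lemma mono_unique {f g : Fin n → ℝ} (hf : Monotone f) (hg : Monotone g)
    (h : (List.ofFn f).Perm (List.ofFn g)) : f = g :=
  List.ofFn_inj.mp (List.Perm.eq_of_sortedLE hf.sortedLE_ofFn hg.sortedLE_ofFn h)

lemma exists_perm_of_perm {f g : Fin n → ℝ} (h : (List.ofFn f).Perm (List.ofFn g)) :
    ∃ σ : Equiv.Perm (Fin n), f = g ∘ σ := by
  have h1 : (f ∘ Tuple.sort f) = (g ∘ Tuple.sort g) := by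
    apply mono_unique (Tuple.monotone_sort f) (Tuple.monotone_sort g)
    exact ((Equiv.Perm.ofFn_comp_perm (Tuple.sort f) f).trans h).trans
      (Equiv.Perm.ofFn_comp_perm (Tuple.sort g) g).symm
  refine ⟨((Tuple.sort f).symm.trans (Tuple.sort g)), ?_⟩
  funext j
  have := congrFun h1 ((Tuple.sort f).symm j)
  simpa using this

lemma charpoly_unitary_conj (V : Matrix.unitaryGroup (Fin n) ℂ) (D : Matrix (Fin n) (Fin n) ℂ) :
    ((V : Matrix (Fin n) (Fin n) ℂ) * D * (star V : Matrix (Fin n) (Fin n) ℂ)).charpoly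
      = D.charpoly := by
  have hV : (V : Matrix (Fin n) (Fin n) ℂ) * (star V : Matrix (Fin n) (Fin n) ℂ) = 1 :=
    Matrix.mem_unitaryGroup_iff.mp V.2
  set φ : Matrix (Fin n) (Fin n) ℂ →+* Matrix (Fin n) (Fin n) ℂ[X] := (C : ℂ →+* ℂ[X]).mapMatrix
  set Vc := φ (V : Matrix (Fin n) (Fin n) ℂ) with hVcdef
  set Wc := φ (star V : Matrix (Fin n) (Fin n) ℂ) with hWcdef
  have hVc : Vc * Wc = 1 := by rw [hVcdef, hWcdef, ← _root_.map_mul, hV, _root_.map_one]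
  have hch : charmatrix ((V : Matrix (Fin n) (Fin n) ℂ) * D * (star V : Matrix (Fin n) (Fin n) ℂ))
      = Vc * charmatrix D * Wc := by
    rw [charmatrix, charmatrix, _root_.map_mul, _root_.map_mul, Matrix.mul_sub, Matrix.sub_mul]
    congr 1
    have hs : (Matrix.scalar (Fin n)) (X : ℂ[X]) = (X : ℂ[X]) • (1 : Matrix (Fin n) (Fin n) ℂ[X]) := by
      simp [Matrix.scalar, Matrix.smul_one_eq_diagonal]
    rw [hs, Matrix.mul_smul, Matrix.mul_one, Matrix.smul_mul, hVc]
  rw [Matrix.charpoly, Matrix.charpoly, hch, det_mul, det_mul]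
  have h1 : det Vc * det Wc = 1 := by rw [← det_mul, hVc, det_one]
  calc det Vc * det (charmatrix D) * det Wc = det Vc * det Wc * det (charmatrix D) := by ring
    _ = det (charmatrix D) := by rw [h1, one_mul]

lemma charpoly_diagonal_real (d : Fin n → ℝ) :
    (Matrix.diagonal (fun i => (d i : ℂ))).charpoly = ∏ i, (X - C (d i : ℂ)) := by
  rw [Matrix.charpoly]
  have h : charmatrix (Matrix.diagonal (fun i => (d i : ℂ)))
      = Matrix.diagonal (fun i => (X : ℂ[X]) - C (d i : ℂ)) := by
    ext i j
    by_cases h : i = j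
    · subst h; simp [charmatrix_apply_eq]
    · simp [charmatrix_apply_ne _ _ _ h, Matrix.diagonal_apply_ne _ h]
  rw [h, det_diagonal]

lemma eigenvalues_perm_of_conj {H : Matrix (Fin n) (Fin n) ℂ} (hH : H.IsHermitian)
    (V : Matrix.unitaryGroup (Fin n) ℂ) (d : Fin n → ℝ)
    (hHV : H = (V : Matrix (Fin n) (Fin n) ℂ) * Matrix.diagonal (fun i => (d i : ℂ))
      * (star V : Matrix (Fin n) (Fin n) ℂ)) :
    ∃ σ : Equiv.Perm (Fin n), hH.eigenvalues = d ∘ σ := by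
  have h1 : ∏ i, (X - C (hH.eigenvalues i : ℂ)) = ∏ i, (X - C (d i : ℂ)) := by
    have e1 : H.charpoly = ∏ i, (X - C (hH.eigenvalues i : ℂ)) := by
      conv_lhs => rw [hH.spectral_theorem]
      rw [show Matrix.diagonal (RCLike.ofReal ∘ hH.eigenvalues : Fin n → ℂ)
        = Matrix.diagonal (fun i => (hH.eigenvalues i : ℂ)) from rfl]
      rw [Unitary.conjStarAlgAut_apply, charpoly_unitary_conj hH.eigenvectorUnitary, charpoly_diagonal_real]
    have e2 : H.charpoly = ∏ i, (X - C (d i : ℂ)) := by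
      conv_lhs => rw [hHV]
      rw [charpoly_unitary_conj, charpoly_diagonal_real]
    rw [← e1, ← e2]
  have h2 : (Multiset.map (fun i => ((hH.eigenvalues i : ℂ))) Finset.univ.val)
      = Multiset.map (fun i => ((d i : ℂ))) Finset.univ.val := by
    have r1 := Polynomial.roots_multiset_prod_X_sub_C
      (Multiset.map (fun i => ((hH.eigenvalues i : ℂ))) Finset.univ.val)
    have r2 := Polynomial.roots_multiset_prod_X_sub_C
      (Multiset.map (fun i => ((d i : ℂ))) Finset.univ.val)
    rw [← r1, ← r2]
    congr 1
    rw [Multiset.map_map, Multiset.map_map]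
    exact h1
  have h3 : (Multiset.map hH.eigenvalues Finset.univ.val)
      = Multiset.map d Finset.univ.val := by
    apply Multiset.map_injective (Complex.ofReal_injective)
    rw [Multiset.map_map, Multiset.map_map]
    exact h2
  apply exists_perm_of_perm
  rw [← Multiset.coe_eq_coe]
  have hofn : ∀ (f : Fin n → ℝ), (List.ofFn f : Multiset ℝ) = Multiset.map f Finset.univ.val := by
    intro f
    rw [List.ofFn_eq_map]
    rfl
  rw [hofn, hofn, h3]


open scoped MatrixOrder in
lemma matAbs_eq_sqrt (X : Matrix (Fin n) (Fin n) ℂ) :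
    matAbs X = CFC.sqrt (Xᴴ * X) := by
  have h := Matrix.posSemidef_conjTranspose_mul_self X
  rw [CFC.sqrt_eq_real_sqrt _ h.nonneg, cfcₙ_eq_cfc, h.1.cfc_eq, Matrix.IsHermitian.cfc,
    Unitary.conjStarAlgAut_apply]
  rfl

open scoped MatrixOrder in
lemma matAbs_posSemidef' (X : Matrix (Fin n) (Fin n) ℂ) : (matAbs X).PosSemidef := by
  rw [matAbs_eq_sqrt]
  exact Matrix.nonneg_iff_posSemidef.mp (CFC.sqrt_nonneg _)

open scoped MatrixOrder in
lemma matAbs_eq_of_sq {X R : Matrix (Fin n) (Fin n) ℂ} (hR : R.PosSemidef)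
    (h : R ^ 2 = Xᴴ * X) : matAbs X = R := by
  rw [matAbs_eq_sqrt]
  exact CFC.sqrt_unique (by rw [← pow_two, h]) hR.nonneg

lemma matAbs_of_posSemidef {X : Matrix (Fin n) (Fin n) ℂ} (hX : X.PosSemidef) :
    matAbs X = X :=
  matAbs_eq_of_sq hX (by rw [pow_two, hX.1.eq])

lemma eigsDesc_of_hermitian {H : Matrix (Fin n) (Fin n) ℂ} (hH : H.IsHermitian) :
    eigsDesc H = fun k => hH.eigenvalues (Tuple.sort hH.eigenvalues (Fin.rev k)) := by
  rw [eigsDesc, dif_pos hH]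

lemma conj_mul_conj (W : Matrix.unitaryGroup (Fin n) ℂ) (E F : Matrix (Fin n) (Fin n) ℂ) :
    ((W : Matrix (Fin n) (Fin n) ℂ) * E * (star W : Matrix (Fin n) (Fin n) ℂ))
      * ((W : Matrix (Fin n) (Fin n) ℂ) * F * (star W : Matrix (Fin n) (Fin n) ℂ))
      = (W : Matrix (Fin n) (Fin n) ℂ) * (E * F) * (star W : Matrix (Fin n) (Fin n) ℂ) := by
  have hWW : (star W : Matrix (Fin n) (Fin n) ℂ) * (W : Matrix (Fin n) (Fin n) ℂ) = 1 :=
    Matrix.mem_unitaryGroup_iff'.mp W.2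
  have h : (W : Matrix (Fin n) (Fin n) ℂ) * E * (star W : Matrix (Fin n) (Fin n) ℂ)
      * ((W : Matrix (Fin n) (Fin n) ℂ) * F * (star W : Matrix (Fin n) (Fin n) ℂ))
      = (W : Matrix (Fin n) (Fin n) ℂ) * E
        * (((star W : Matrix (Fin n) (Fin n) ℂ) * (W : Matrix (Fin n) (Fin n) ℂ))
          * (F * (star W : Matrix (Fin n) (Fin n) ℂ))) := by
    noncomm_ring
  rw [h, hWW, one_mul]
  noncomm_ring

/-- Spectral data for a Hermitian matrix together with its matrix absolute value. -/
lemma spectral_package {T : Matrix (Fin n) (Fin n) ℂ} (hT : T.IsHermitian) :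
    ∃ (W : Matrix.unitaryGroup (Fin n) ℂ) (τ : Fin n → ℝ),
      T = (W : Matrix (Fin n) (Fin n) ℂ) * Matrix.diagonal (fun i => (τ i : ℂ))
          * (star W : Matrix (Fin n) (Fin n) ℂ) ∧
      matAbs T = (W : Matrix (Fin n) (Fin n) ℂ)
          * Matrix.diagonal (fun i => ((|τ i| : ℝ) : ℂ))
          * (star W : Matrix (Fin n) (Fin n) ℂ) := by
  refine ⟨hT.eigenvectorUnitary, hT.eigenvalues, hT.spectral_theorem, ?_⟩
  set W := hT.eigenvectorUnitary with hWdef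
  set τ := hT.eigenvalues with hτdef
  have hTdecomp : T = (W : Matrix (Fin n) (Fin n) ℂ) * Matrix.diagonal (fun i => (τ i : ℂ))
      * (star W : Matrix (Fin n) (Fin n) ℂ) := hT.spectral_theorem
  set R := (W : Matrix (Fin n) (Fin n) ℂ) * Matrix.diagonal (fun i => ((|τ i| : ℝ) : ℂ))
      * (star W : Matrix (Fin n) (Fin n) ℂ) with hRdef
  have hR : R.PosSemidef := by
    apply Matrix.PosSemidef.mul_mul_conjTranspose_same
    exact Matrix.posSemidef_diagonal_iff.mpr fun i => by
      rw [Complex.zero_le_real]; positivity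
  have hsq : R ^ 2 = Tᴴ * T := by
    rw [hT.eq, pow_two, hRdef, conj_mul_conj, Matrix.diagonal_mul_diagonal]
    conv_rhs => rw [hTdecomp]
    rw [conj_mul_conj, Matrix.diagonal_mul_diagonal]
    simp only [← Complex.ofReal_mul, abs_mul_abs_self]
  exact matAbs_eq_of_sq hR hsq

lemma matAbs_sub_posSemidef {T : Matrix (Fin n) (Fin n) ℂ} (hT : T.IsHermitian) :
    (matAbs T - T).PosSemidef := by
  obtain ⟨W, τ, h1, h2⟩ := spectral_package hT
  rw [h2]
  rw [h1]
  rw [← Matrix.sub_mul, ← Matrix.mul_sub, Matrix.diagonal_sub]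
  apply Matrix.PosSemidef.mul_mul_conjTranspose_same
  exact Matrix.posSemidef_diagonal_iff.mpr fun i => by
    rw [← Complex.ofReal_sub, Complex.zero_le_real]
    have := le_abs_self (τ i)
    linarith

lemma matAbs_add_posSemidef {T : Matrix (Fin n) (Fin n) ℂ} (hT : T.IsHermitian) :
    (matAbs T + T).PosSemidef := by
  obtain ⟨W, τ, h1, h2⟩ := spectral_package hT
  rw [h2]
  rw [h1]
  rw [← Matrix.add_mul, ← Matrix.mul_add, Matrix.diagonal_add]
  apply Matrix.PosSemidef.mul_mul_conjTranspose_same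
  exact Matrix.posSemidef_diagonal_iff.mpr fun i => by
    rw [← Complex.ofReal_add, Complex.zero_le_real]
    have := neg_abs_le (τ i)
    linarith


lemma conj_entry (M V : Matrix (Fin n) (Fin n) ℂ) (i : Fin n) :
    (Vᴴ * M * V) i i = star (fun p => V p i) ⬝ᵥ (M *ᵥ (fun p => V p i)) := by
  simp only [Matrix.mul_apply, Matrix.mulVec, dotProduct, Pi.star_apply,
    Matrix.conjTranspose_apply, Finset.sum_mul, Finset.mul_sum]
  rw [Finset.sum_comm]
  exact Finset.sum_congr rfl fun q _ => Finset.sum_congr rfl fun p _ => by ring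

lemma antitone_sorted_rev {μ : Fin n → ℝ} :
    Antitone (fun j : Fin n => μ (Tuple.sort μ (Fin.rev j))) := by
  have h1 : Monotone (μ ∘ (Tuple.sort μ)) := Tuple.monotone_sort μ
  have h2 : Antitone (Fin.rev : Fin n → Fin n) := fun a b hab => Fin.rev_le_rev.mpr hab
  exact h1.comp_antitone h2

lemma kyfan_upper {S : Matrix (Fin n) (Fin n) ℂ} (hS : S.PosSemidef)
    (V : Matrix.unitaryGroup (Fin n) ℂ) (J : Finset (Fin n)) (k : ℕ) (hJ : J.card ≤ k) :
    ∑ i ∈ J, (star (fun p => (V : Matrix (Fin n) (Fin n) ℂ) p i) ⬝ᵥ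
      (S *ᵥ (fun p => (V : Matrix (Fin n) (Fin n) ℂ) p i))).re ≤ kSum (eigsDesc S) k := by
  obtain ⟨W, μ, hdecomp, hμnonneg, heig⟩ :
      ∃ (W : Matrix.unitaryGroup (Fin n) ℂ) (μ : Fin n → ℝ),
        S = (W : Matrix (Fin n) (Fin n) ℂ) * Matrix.diagonal (fun i => (μ i : ℂ))
          * (star W : Matrix (Fin n) (Fin n) ℂ) ∧ (∀ i, 0 ≤ μ i) ∧
          eigsDesc S = fun j => μ (Tuple.sort μ (Fin.rev j)) :=
    ⟨hS.1.eigenvectorUnitary, hS.1.eigenvalues, hS.1.spectral_theorem,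
      fun i => hS.eigenvalues_nonneg i, eigsDesc_of_hermitian hS.1⟩
  set N : Matrix (Fin n) (Fin n) ℂ :=
    (star W : Matrix (Fin n) (Fin n) ℂ) * (V : Matrix (Fin n) (Fin n) ℂ) with hNdef
  have hVV : (V : Matrix (Fin n) (Fin n) ℂ) * (star V : Matrix (Fin n) (Fin n) ℂ) = 1 :=
    Matrix.mem_unitaryGroup_iff.mp V.2
  have hVV' : (star V : Matrix (Fin n) (Fin n) ℂ) * (V : Matrix (Fin n) (Fin n) ℂ) = 1 :=
    Matrix.mem_unitaryGroup_iff'.mp V.2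
  have hWW : (W : Matrix (Fin n) (Fin n) ℂ) * (star W : Matrix (Fin n) (Fin n) ℂ) = 1 :=
    Matrix.mem_unitaryGroup_iff.mp W.2
  have hWW' : (star W : Matrix (Fin n) (Fin n) ℂ) * (W : Matrix (Fin n) (Fin n) ℂ) = 1 :=
    Matrix.mem_unitaryGroup_iff'.mp W.2
  have hstarN : star N = (star V : Matrix (Fin n) (Fin n) ℂ) * (W : Matrix (Fin n) (Fin n) ℂ) := by
    rw [hNdef, StarMul.star_mul, star_star]
  have hNN : N * star N = 1 := by
    rw [hstarN, hNdef, Matrix.mul_assoc, ← Matrix.mul_assoc (V : Matrix (Fin n) (Fin n) ℂ),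
      hVV, Matrix.one_mul, hWW']
  have hNN' : star N * N = 1 := by
    rw [hstarN, hNdef, Matrix.mul_assoc, ← Matrix.mul_assoc (W : Matrix (Fin n) (Fin n) ℂ),
      hWW, Matrix.one_mul, hVV']
  -- row sums of |N|² are 1
  have hrow : ∀ p : Fin n, ∑ i, Complex.normSq (N p i) = 1 := by
    intro p
    have h : (N * star N) p p = (1 : Matrix (Fin n) (Fin n) ℂ) p p := by rw [hNN]
    rw [Matrix.mul_apply, Matrix.one_apply_eq] at h
    have h2 : ∀ i, N p i * star N i p = (Complex.normSq (N p i) : ℂ) := by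
      intro i
      rw [Matrix.star_apply, Complex.star_def, Complex.mul_conj]
    simp_rw [h2] at h
    exact_mod_cast h
  -- column sums of |N|² are 1
  have hcol : ∀ i : Fin n, ∑ p, Complex.normSq (N p i) = 1 := by
    intro i
    have h : (star N * N) i i = (1 : Matrix (Fin n) (Fin n) ℂ) i i := by rw [hNN']
    rw [Matrix.mul_apply, Matrix.one_apply_eq] at h
    have h2 : ∀ p, star N i p * N p i = (Complex.normSq (N p i) : ℂ) := by
      intro p
      rw [Matrix.star_apply, Complex.star_def, mul_comm, Complex.mul_conj]
    simp_rw [h2] at h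
    exact_mod_cast h
  -- the quadratic form
  have hform : ∀ i : Fin n,
      (star (fun p => (V : Matrix (Fin n) (Fin n) ℂ) p i) ⬝ᵥ
        (S *ᵥ (fun p => (V : Matrix (Fin n) (Fin n) ℂ) p i))).re
      = ∑ p, μ p * Complex.normSq (N p i) := by
    intro i
    rw [← conj_entry]
    have hmat : (star V : Matrix (Fin n) (Fin n) ℂ) * S * (V : Matrix (Fin n) (Fin n) ℂ)
        = star N * Matrix.diagonal (fun j => (μ j : ℂ)) * N := by
      rw [hdecomp, hstarN, hNdef]
      noncomm_ring
    have : (V : Matrix (Fin n) (Fin n) ℂ)ᴴ * S * (V : Matrix (Fin n) (Fin n) ℂ)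
        = star N * Matrix.diagonal (fun j => (μ j : ℂ)) * N := hmat
    rw [this, Matrix.mul_apply]
    have hentry : ∀ p, (star N * Matrix.diagonal (fun j => (μ j : ℂ))) i p * N p i
        = ((μ p * Complex.normSq (N p i) : ℝ) : ℂ) := by
      intro p
      rw [Matrix.mul_diagonal, Matrix.star_apply, Complex.star_def]
      rw [show (starRingEnd ℂ) (N p i) * ((μ p : ℝ) : ℂ) * N p i
          = ((μ p : ℝ) : ℂ) * ((starRingEnd ℂ) (N p i) * N p i) from by ring,
        ← Complex.normSq_eq_conj_mul_self]
      push_cast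
      ring
    simp_rw [hentry]
    rw [← Complex.ofReal_sum]
    rw [Complex.ofReal_re]
  -- introduce weights
  set t : Fin n → ℝ := fun p => ∑ i ∈ J, Complex.normSq (N p i) with htdef
  have hswap : ∑ i ∈ J, (star (fun p => (V : Matrix (Fin n) (Fin n) ℂ) p i) ⬝ᵥ
      (S *ᵥ (fun p => (V : Matrix (Fin n) (Fin n) ℂ) p i))).re = ∑ p, μ p * t p := by
    simp_rw [hform, htdef, Finset.mul_sum]
    rw [Finset.sum_comm]
  rw [hswap, heig]
  -- reindex by the sorting permutation and apply the abstract bound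
  set σ : Equiv.Perm (Fin n) := Fin.revPerm.trans (Tuple.sort μ) with hσdef
  have hcomp : ∀ j, μ (Tuple.sort μ (Fin.rev j)) = (μ ∘ σ) j := by
    intro j; simp [hσdef, Equiv.trans_apply]
  have hsum_eq : ∑ p, μ p * t p = ∑ j, (μ ∘ σ) j * (t ∘ σ) j := by
    rw [← Equiv.sum_comp σ (fun p => μ p * t p)]
    rfl
  have habs := kfan_abstract (k := k) (μ ∘ σ) (t ∘ σ)
    (by
      have : (μ ∘ σ) = fun j : Fin n => μ (Tuple.sort μ (Fin.rev j)) := by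
        funext j; rw [hcomp]
      rw [this]; exact antitone_sorted_rev)
    (fun i => hμnonneg _)
    (fun i => Finset.sum_nonneg fun _ _ => Complex.normSq_nonneg _)
    (by
      intro p
      rw [Function.comp_apply, htdef]
      calc ∑ i ∈ J, Complex.normSq (N (σ p) i)
          ≤ ∑ i, Complex.normSq (N (σ p) i) :=
            Finset.sum_le_sum_of_subset_of_nonneg (Finset.subset_univ J)
              (fun _ _ _ => Complex.normSq_nonneg _)
        _ = 1 := hrow (σ p))
    (by
      have : ∑ j, (t ∘ σ) j = ∑ p, t p := Equiv.sum_comp σ t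
      rw [this, htdef]
      have : ∑ p, ∑ i ∈ J, Complex.normSq (N p i) = ∑ i ∈ J, ∑ p, Complex.normSq (N p i) :=
        Finset.sum_comm
      rw [this]
      simp_rw [hcol]
      simp only [Finset.sum_const, nsmul_eq_mul, mul_one]
      exact_mod_cast hJ)
  rw [hsum_eq]
  calc ∑ j, (μ ∘ σ) j * (t ∘ σ) j ≤ kSum (μ ∘ σ) k := habs
    _ = kSum (fun j => μ (Tuple.sort μ (Fin.rev j))) k := by
        apply Finset.sum_congr rfl
        intro j _
        simpa using (hcomp j).symm

end BhatiaAux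

/-- Bhatia: for PSD `A, B` and every `k`, the sum of the `k` largest singular
values of `(A−B)²` is at most that of `A²−B²`. -/
theorem kyfan_sq_sub {n : ℕ} (A B : Matrix (Fin n) (Fin n) ℂ)
    (hA : A.PosSemidef) (hB : B.PosSemidef) (k : ℕ) :
    kSum (svalsDesc ((A - B) ^ 2)) k ≤ kSum (svalsDesc (A ^ 2 - B ^ 2)) k := by

  have hC : (A - B).IsHermitian := hA.1.sub hB.1
  have hT : (A ^ 2 - B ^ 2).IsHermitian := (hA.1.pow 2).sub (hB.1.pow 2)
  have hCsq : ((A - B) ^ 2).PosSemidef := by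
    have h := Matrix.posSemidef_conjTranspose_mul_self (A - B)
    rwa [hC.eq, ← pow_two] at h
  have hR : (matAbs (A ^ 2 - B ^ 2)).PosSemidef :=
    matAbs_posSemidef' _
  -- spectral data for C = A - B
  set U := hC.eigenvectorUnitary with hUdef
  set lam := hC.eigenvalues with hlamdef
  have hCdecomp : A - B = (U : Matrix (Fin n) (Fin n) ℂ)
      * Matrix.diagonal (fun i => (lam i : ℂ)) * (star U : Matrix (Fin n) (Fin n) ℂ) :=
    hC.spectral_theorem
  have hUU : (U : Matrix (Fin n) (Fin n) ℂ) * (star U : Matrix (Fin n) (Fin n) ℂ) = 1 :=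
    Matrix.mem_unitaryGroup_iff.mp U.2
  have hUU' : (star U : Matrix (Fin n) (Fin n) ℂ) * (U : Matrix (Fin n) (Fin n) ℂ) = 1 :=
    Matrix.mem_unitaryGroup_iff'.mp U.2
  -- decomposition of C²
  have hC2decomp : (A - B) ^ 2 = (U : Matrix (Fin n) (Fin n) ℂ)
      * Matrix.diagonal (fun i => ((lam i ^ 2 : ℝ) : ℂ))
      * (star U : Matrix (Fin n) (Fin n) ℂ) := by
    rw [pow_two]
    conv_lhs => rw [hCdecomp]
    rw [conj_mul_conj, Matrix.diagonal_mul_diagonal]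
    push_cast
    simp [pow_two]
  obtain ⟨σ, hσ⟩ := eigenvalues_perm_of_conj hCsq.1 U (fun i => lam i ^ 2) hC2decomp
  -- the rearrangement of the left-hand side
  set g : Equiv.Perm (Fin n) :=
    (Fin.revPerm.trans (Tuple.sort hCsq.1.eigenvalues)).trans σ with hgdef
  have hLHS : ∀ j : Fin n, eigsDesc ((A - B) ^ 2) j = lam (g j) ^ 2 := by
    intro j
    simp only [eigsDesc_of_hermitian hCsq.1]
    have := congrFun hσ (Tuple.sort hCsq.1.eigenvalues (Fin.rev j))
    simp only [Function.comp_apply] at this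
    rw [this]
    rfl
  set F := Finset.univ.filter (fun j : Fin n => (j : ℕ) < k) with hFdef
  set J := F.image g with hJdef
  have hJcard : J.card ≤ k := by
    calc J.card ≤ F.card := Finset.card_image_le
      _ ≤ (Finset.range k).card := by
          refine Finset.card_le_card_of_injOn (fun a : Fin n => (a : ℕ)) ?_ ?_
          · intro a ha
            have ha' : a ∈ F := ha
            simp only [hFdef, Finset.mem_filter] at ha'
            simpa using ha'.2
          · intro a _ b _ h
            exact Fin.val_injective h
      _ = k := Finset.card_range k
  have hsum_lhs : kSum (svalsDesc ((A - B) ^ 2)) k = ∑ i ∈ J, lam i ^ 2 := by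
    have h1 : svalsDesc ((A - B) ^ 2) = eigsDesc ((A - B) ^ 2) := by
      rw [svalsDesc, matAbs_of_posSemidef hCsq]
    rw [kSum, h1, hJdef]
    rw [Finset.sum_image (fun a _ b _ h => g.injective h)]
    exact Finset.sum_congr rfl fun j _ => hLHS j
  rw [hsum_lhs]
  -- quadratic forms of the eigenvectors of C
  have key : ∀ i : Fin n, lam i ^ 2 ≤
      (star (fun p => (U : Matrix (Fin n) (Fin n) ℂ) p i) ⬝ᵥ
        (matAbs (A ^ 2 - B ^ 2) *ᵥ (fun p => (U : Matrix (Fin n) (Fin n) ℂ) p i))).re := by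
    intro i
    set x : Fin n → ℂ := fun p => (U : Matrix (Fin n) (Fin n) ℂ) p i with hxdef
    -- the C-form is the eigenvalue
    have hCmat : (star U : Matrix (Fin n) (Fin n) ℂ) * (A - B) * (U : Matrix (Fin n) (Fin n) ℂ)
        = Matrix.diagonal (fun i => (lam i : ℂ)) := by
      conv_lhs => rw [hCdecomp]
      rw [show (star U : Matrix (Fin n) (Fin n) ℂ) * ((U : Matrix (Fin n) (Fin n) ℂ)
        * Matrix.diagonal (fun i => (lam i : ℂ)) * (star U : Matrix (Fin n) (Fin n) ℂ))
        * (U : Matrix (Fin n) (Fin n) ℂ)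
        = ((star U : Matrix (Fin n) (Fin n) ℂ) * (U : Matrix (Fin n) (Fin n) ℂ))
          * Matrix.diagonal (fun i => (lam i : ℂ))
          * ((star U : Matrix (Fin n) (Fin n) ℂ) * (U : Matrix (Fin n) (Fin n) ℂ)) from by
          noncomm_ring]
      rw [hUU', Matrix.one_mul, Matrix.mul_one]
    have hcform : star x ⬝ᵥ ((A - B) *ᵥ x) = (lam i : ℂ) := by
      rw [← conj_entry, show ((U : Matrix (Fin n) (Fin n) ℂ))ᴴ
        = (star U : Matrix (Fin n) (Fin n) ℂ) from rfl, hCmat, Matrix.diagonal_apply_eq]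
    -- the D-form
    set e : ℂ := star x ⬝ᵥ ((A + B) *ᵥ x) with hedef
    have hBform : (0 : ℂ) ≤ star x ⬝ᵥ ((B + B) *ᵥ x) := (hB.add hB).dotProduct_mulVec_nonneg x
    have hAform : (0 : ℂ) ≤ star x ⬝ᵥ ((A + A) *ᵥ x) := (hA.add hA).dotProduct_mulVec_nonneg x
    have hsub : star x ⬝ᵥ ((B + B) *ᵥ x) = e - (lam i : ℂ) := by
      rw [hedef, ← hcform, ← dotProduct_sub, ← Matrix.sub_mulVec]
      congr 2
      abel_nf
    have hadd : star x ⬝ᵥ ((A + A) *ᵥ x) = e + (lam i : ℂ) := by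
      rw [hedef, ← hcform, ← dotProduct_add, ← Matrix.add_mulVec]
      congr 2
      abel_nf
    rw [hsub] at hBform
    rw [hadd] at hAform
    have him : e.im = 0 := by
      have h1 := (Complex.le_def.mp hBform).2
      simp at h1
      linarith
    have hlow : |lam i| ≤ e.re := by
      have h1 := (Complex.le_def.mp hBform).1
      have h2 := (Complex.le_def.mp hAform).1
      simp at h1 h2
      rw [abs_le]
      constructor <;> linarith
    -- the T-form
    have hTmat : ∀ i : Fin n, ((star U : Matrix (Fin n) (Fin n) ℂ) * (A ^ 2 - B ^ 2)
        * (U : Matrix (Fin n) (Fin n) ℂ)) i i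
        = (lam i : ℂ) * (((star U : Matrix (Fin n) (Fin n) ℂ) * (A + B)
          * (U : Matrix (Fin n) (Fin n) ℂ)) i i) := by
      intro j
      set G := (star U : Matrix (Fin n) (Fin n) ℂ) * (A + B) * (U : Matrix (Fin n) (Fin n) ℂ)
        with hGdef
      have h2T : (A ^ 2 - B ^ 2) + (A ^ 2 - B ^ 2) = (A - B) * (A + B) + (A + B) * (A - B) := by
        noncomm_ring
      have hprod : ∀ (M1 M2 : Matrix (Fin n) (Fin n) ℂ),
          ((star U : Matrix (Fin n) (Fin n) ℂ) * M1 * (U : Matrix (Fin n) (Fin n) ℂ))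
            * ((star U : Matrix (Fin n) (Fin n) ℂ) * M2 * (U : Matrix (Fin n) (Fin n) ℂ))
          = (star U : Matrix (Fin n) (Fin n) ℂ) * (M1 * M2) * (U : Matrix (Fin n) (Fin n) ℂ) := by
        intro M1 M2
        calc ((star U : Matrix (Fin n) (Fin n) ℂ) * M1 * (U : Matrix (Fin n) (Fin n) ℂ))
            * ((star U : Matrix (Fin n) (Fin n) ℂ) * M2 * (U : Matrix (Fin n) (Fin n) ℂ))
            = (star U : Matrix (Fin n) (Fin n) ℂ) * M1
              * (((U : Matrix (Fin n) (Fin n) ℂ) * (star U : Matrix (Fin n) (Fin n) ℂ))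
                * (M2 * (U : Matrix (Fin n) (Fin n) ℂ))) := by noncomm_ring
          _ = (star U : Matrix (Fin n) (Fin n) ℂ) * (M1 * M2) * (U : Matrix (Fin n) (Fin n) ℂ) := by
              rw [hUU, Matrix.one_mul]; noncomm_ring
      have hTT : ((star U : Matrix (Fin n) (Fin n) ℂ) * (A ^ 2 - B ^ 2)
          * (U : Matrix (Fin n) (Fin n) ℂ))
          + ((star U : Matrix (Fin n) (Fin n) ℂ) * (A ^ 2 - B ^ 2)
          * (U : Matrix (Fin n) (Fin n) ℂ))
          = Matrix.diagonal (fun i => (lam i : ℂ)) * G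
            + G * Matrix.diagonal (fun i => (lam i : ℂ)) := by
        have hstep : ((star U : Matrix (Fin n) (Fin n) ℂ) * (A ^ 2 - B ^ 2)
            * (U : Matrix (Fin n) (Fin n) ℂ))
            + ((star U : Matrix (Fin n) (Fin n) ℂ) * (A ^ 2 - B ^ 2)
            * (U : Matrix (Fin n) (Fin n) ℂ))
            = (star U : Matrix (Fin n) (Fin n) ℂ) * ((A - B) * (A + B))
              * (U : Matrix (Fin n) (Fin n) ℂ)
            + (star U : Matrix (Fin n) (Fin n) ℂ) * ((A + B) * (A - B))
              * (U : Matrix (Fin n) (Fin n) ℂ) := by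
          rw [show ∀ (P Q R : Matrix (Fin n) (Fin n) ℂ), P * Q * R + P * Q * R
            = P * (Q + Q) * R from fun P Q R => by noncomm_ring, h2T]
          noncomm_ring
        rw [hstep, ← hprod, ← hprod, hCmat, hGdef]
      have := congrFun (congrFun hTT j) j
      simp only [Matrix.add_apply, Matrix.diagonal_mul, Matrix.mul_diagonal] at this
      have hcomm : (lam j : ℂ) * G j j + G j j * (lam j : ℂ)
          = 2 * ((lam j : ℂ) * G j j) := by ring
      rw [hcomm] at this
      have h2 : (2 : ℂ) * (((star U : Matrix (Fin n) (Fin n) ℂ) * (A ^ 2 - B ^ 2)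
          * (U : Matrix (Fin n) (Fin n) ℂ)) j j)
          = 2 * ((lam j : ℂ) * G j j) := by
        rw [← this]; ring
      have := mul_left_cancel₀ (two_ne_zero' ℂ) h2
      exact this
    have hTform : star x ⬝ᵥ ((A ^ 2 - B ^ 2) *ᵥ x) = (lam i : ℂ) * e := by
      rw [← conj_entry, show ((U : Matrix (Fin n) (Fin n) ℂ))ᴴ
        = (star U : Matrix (Fin n) (Fin n) ℂ) from rfl, hTmat i, hedef, ← conj_entry]
      rfl
    -- e is real
    have hereal : e = ((e.re : ℝ) : ℂ) := Complex.ext (by simp) (by simp [him])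
    -- |T|-forms
    set r : ℂ := star x ⬝ᵥ (matAbs (A ^ 2 - B ^ 2) *ᵥ x) with hrdef
    have hsubT : (0 : ℂ) ≤ r - (lam i : ℂ) * e := by
      have h := (matAbs_sub_posSemidef hT).dotProduct_mulVec_nonneg x
      rwa [Matrix.sub_mulVec, dotProduct_sub, ← hrdef, hTform] at h
    have haddT : (0 : ℂ) ≤ r + (lam i : ℂ) * e := by
      have h := (matAbs_add_posSemidef hT).dotProduct_mulVec_nonneg x
      rwa [Matrix.add_mulVec, dotProduct_add, ← hrdef, hTform] at h
    have h1 : lam i * e.re ≤ r.re := by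
      have := (Complex.le_def.mp hsubT).1
      rw [hereal] at this
      simp at this
      nlinarith [this]
    have h2 : -(lam i * e.re) ≤ r.re := by
      have := (Complex.le_def.mp haddT).1
      rw [hereal] at this
      simp at this
      nlinarith [this]
    -- conclude
    have hd0 : 0 ≤ e.re := le_trans (abs_nonneg _) hlow
    have habs : |lam i| * e.re ≤ r.re := by
      rcases le_total 0 (lam i) with h | h
      · rw [abs_of_nonneg h]; exact h1
      · rw [abs_of_nonpos h]; calc -lam i * e.re = -(lam i * e.re) := by ring
          _ ≤ r.re := h2
    calc lam i ^ 2 = |lam i| * |lam i| := by rw [abs_mul_abs_self]; ring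
      _ ≤ |lam i| * e.re := mul_le_mul_of_nonneg_left hlow (abs_nonneg _)
      _ ≤ r.re := habs
  calc ∑ i ∈ J, lam i ^ 2
      ≤ ∑ i ∈ J, (star (fun p => (U : Matrix (Fin n) (Fin n) ℂ) p i) ⬝ᵥ
        (matAbs (A ^ 2 - B ^ 2) *ᵥ (fun p => (U : Matrix (Fin n) (Fin n) ℂ) p i))).re :=
        Finset.sum_le_sum fun i _ => key i
    _ ≤ kSum (eigsDesc (matAbs (A ^ 2 - B ^ 2))) k := kyfan_upper hR U J k hJcard
    _ = kSum (svalsDesc (A ^ 2 - B ^ 2)) k := rfl
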